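/- The multilinear part of degree 3 of log((1+X₁)(1+X₂)(1+X₃)) equals (1/3)(X₁X₂X₃ + X₃X₂X₁) - (1/6)(X₁X₃X₂ + X₂X₁X₃ + X₂X₃X₁ + X₃X₁X₂). -/

import Mathlib

open scoped Classical

/-- The relation on the free associative algebra `ℚ⟨X₁,...,Xₙ⟩` identifying with `0` every
word in which some variable appears more than once.  Quotienting by it retains exactly the
span of the multilinear words (each variable appearing at most once), realizing the
truncation "`Xᵢ² = 0`" of the context. -/
def mlRel (n : ℕ) : FreeAlgebra ℚ (Fin n) → FreeAlgebra ℚ (Fin n) → Prop := fun a b =>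
  (∃ l : List (Fin n), ¬ l.Nodup ∧ a = (l.map (FreeAlgebra.ι ℚ)).prod) ∧ b = 0

/-- The multilinear truncation of the free associative algebra on `n` variables. -/
abbrev MLAlg (n : ℕ) := RingQuot (mlRel n)

/-- The generators `X₁, ..., Xₙ` in the multilinear truncation. -/
noncomputable def mlX (n : ℕ) (i : Fin n) : MLAlg n :=
  RingQuot.mkAlgHom ℚ (mlRel n) (FreeAlgebra.ι ℚ i)

/-- The nilpotent element `Z = (1+X₁)(1+X₂)⋯(1+Xₙ) - 1`. -/
noncomputable def mlZ (n : ℕ) : MLAlg n :=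
  (List.ofFn fun i : Fin n => 1 + mlX n i).prod - 1

/-- `log((1+X₁)(1+X₂)⋯(1+Xₙ)) = ∑_{k≥1} (-1)^{k-1} Z^k / k`; since every word of length
`> n` repeats a variable and hence vanishes in the truncation, `Z^{n+1} = 0` and the series
terminates at `k = n`. -/
noncomputable def mlLog (n : ℕ) : MLAlg n :=
  ∑ k ∈ Finset.Icc 1 n, ((-1 : ℚ) ^ (k - 1) / (k : ℚ)) • (mlZ n) ^ k

/-- Any word with a repeated letter vanishes in the multilinear truncation. -/
lemma wzero (l : List (Fin 3)) (h : ¬ l.Nodup) : (l.map (mlX 3)).prod = 0 := by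
  have e : (l.map (mlX 3)).prod
      = RingQuot.mkAlgHom ℚ (mlRel 3) ((l.map (FreeAlgebra.ι ℚ)).prod) := by
    rw [map_list_prod, List.map_map]; rfl
  have h2 := RingQuot.mkAlgHom_rel ℚ
    (show mlRel 3 ((l.map (FreeAlgebra.ι ℚ)).prod) 0 from ⟨⟨l, h, rfl⟩, rfl⟩)
  rw [e, h2, map_zero]

local notation "𝕩" => mlX 3

lemma z2 (a : Fin 3) : 𝕩 a * 𝕩 a = 0 := by
  have := wzero [a,a] (by simp); simpa using this

lemma z3a (a b : Fin 3) : 𝕩 a * (𝕩 a * 𝕩 b) = 0 := by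
  have := wzero [a,a,b] (by simp); simpa [mul_assoc] using this

lemma z3b (a b : Fin 3) : 𝕩 a * (𝕩 b * 𝕩 a) = 0 := by
  have := wzero [a,b,a] (by simp); simpa [mul_assoc] using this

lemma z3c (a b : Fin 3) : 𝕩 a * (𝕩 b * 𝕩 b) = 0 := by
  have := wzero [a,b,b] (by simp); simpa [mul_assoc] using this

lemma z4 (a b c d : Fin 3) : 𝕩 a * (𝕩 b * (𝕩 c * 𝕩 d)) = 0 := by
  have hnd : ¬ ([a,b,c,d] : List (Fin 3)).Nodup := by
    intro h
    have := h.length_le_card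
    simp at this
  have := wzero [a,b,c,d] hnd; simpa [mul_assoc] using this

lemma z4t (a b c d : Fin 3) (y : MLAlg 3) : 𝕩 a * (𝕩 b * (𝕩 c * (𝕩 d * y))) = 0 := by
  have : 𝕩 a * (𝕩 b * (𝕩 c * (𝕩 d * y))) = (𝕩 a * (𝕩 b * (𝕩 c * 𝕩 d))) * y := by
    simp [mul_assoc]
  rw [this, z4, zero_mul]

lemma zexp : mlZ 3 = 𝕩 0 + 𝕩 1 + 𝕩 2 + (𝕩 0 * 𝕩 1 + 𝕩 0 * 𝕩 2 + 𝕩 1 * 𝕩 2) + 𝕩 0 * (𝕩 1 * 𝕩 2) := by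
  show ((1 + 𝕩 0) * ((1 + 𝕩 1) * ((1 + 𝕩 2) * 1))) - 1 = _
  simp only [mul_one, mul_add, add_mul, one_mul]
  abel

lemma zsq : mlZ 3 ^ 2 =
    (𝕩 0*𝕩 1 + 𝕩 1*𝕩 0 + 𝕩 0*𝕩 2 + 𝕩 2*𝕩 0 + 𝕩 1*𝕩 2 + 𝕩 2*𝕩 1)
    + (2:ℚ) • (𝕩 0 * (𝕩 1 * 𝕩 2)) + 𝕩 2*(𝕩 0*𝕩 1) + 𝕩 1*(𝕩 0*𝕩 2) + 𝕩 0*(𝕩 2*𝕩 1) + 𝕩 1*(𝕩 2*𝕩 0) := by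
  rw [zexp, pow_two]
  simp only [mul_add, add_mul, mul_assoc, z2, z3a, z3b, z3c, z4, z4t, mul_zero, zero_mul,
    add_zero, zero_add]
  module

lemma zcube : mlZ 3 ^ 3 =
    𝕩 0*(𝕩 1*𝕩 2) + 𝕩 0*(𝕩 2*𝕩 1) + 𝕩 1*(𝕩 0*𝕩 2) + 𝕩 1*(𝕩 2*𝕩 0) + 𝕩 2*(𝕩 0*𝕩 1) + 𝕩 2*(𝕩 1*𝕩 0) := by
  rw [zexp, pow_succ, pow_two]
  simp only [mul_add, add_mul, mul_assoc, z2, z3a, z3b, z3c, z4, z4t, mul_zero, zero_mul,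
    add_zero, zero_add]
  module

lemma key : mlLog 3 -
        ((1 / 3 : ℚ) • (𝕩 0 * 𝕩 1 * 𝕩 2 + 𝕩 2 * 𝕩 1 * 𝕩 0)
          - (1 / 6 : ℚ) • (𝕩 0 * 𝕩 2 * 𝕩 1 + 𝕩 1 * 𝕩 0 * 𝕩 2
            + 𝕩 1 * 𝕩 2 * 𝕩 0 + 𝕩 2 * 𝕩 0 * 𝕩 1)) =
    (𝕩 0 + 𝕩 1 + 𝕩 2) + (1/2:ℚ) • (𝕩 0*𝕩 1 + 𝕩 0*𝕩 2 + 𝕩 1*𝕩 2)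
      - (1/2:ℚ) • (𝕩 1*𝕩 0 + 𝕩 2*𝕩 0 + 𝕩 2*𝕩 1) := by
  have hlog : mlLog 3 = (1:ℚ) • mlZ 3 + (-(1/2):ℚ) • mlZ 3 ^ 2 + (1/3:ℚ) • mlZ 3 ^ 3 := by
    rw [mlLog, show (Finset.Icc 1 3 : Finset ℕ) = {1,2,3} from rfl,
      Finset.sum_insert (by decide), Finset.sum_insert (by decide), Finset.sum_singleton]
    norm_num [add_assoc]
  rw [hlog, zsq, zcube, zexp]
  simp only [mul_assoc]
  module

/-- The degree-3 multilinear part of `log((1+X₁)(1+X₂)(1+X₃))` equals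
`(1/3)(X₁X₂X₃ + X₃X₂X₁) - (1/6)(X₁X₃X₂ + X₂X₁X₃ + X₂X₃X₁ + X₃X₁X₂)`; equivalently, the
difference between `log((1+X₁)(1+X₂)(1+X₃))` and this expression lies in the span of the
products of fewer than 3 generators. -/
theorem multilinear_log_three_degree_three :
    mlLog 3 -
        ((1 / 3 : ℚ) • (mlX 3 0 * mlX 3 1 * mlX 3 2 + mlX 3 2 * mlX 3 1 * mlX 3 0)
          - (1 / 6 : ℚ) • (mlX 3 0 * mlX 3 2 * mlX 3 1 + mlX 3 1 * mlX 3 0 * mlX 3 2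
            + mlX 3 1 * mlX 3 2 * mlX 3 0 + mlX 3 2 * mlX 3 0 * mlX 3 1)) ∈
      Submodule.span ℚ
        {x : MLAlg 3 | ∃ l : List (Fin 3), l.length < 3 ∧ x = (l.map (mlX 3)).prod} := by
  rw [key]
  have mem1 : ∀ i : Fin 3, mlX 3 i ∈ Submodule.span ℚ
      {x : MLAlg 3 | ∃ l : List (Fin 3), l.length < 3 ∧ x = (l.map (mlX 3)).prod} := fun i =>
    Submodule.subset_span ⟨[i], by norm_num, by simp⟩
  have mem2 : ∀ i j : Fin 3, mlX 3 i * mlX 3 j ∈ Submodule.span ℚ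
      {x : MLAlg 3 | ∃ l : List (Fin 3), l.length < 3 ∧ x = (l.map (mlX 3)).prod} := fun i j =>
    Submodule.subset_span ⟨[i, j], by norm_num, by simp⟩
  exact sub_mem
    (add_mem (add_mem (add_mem (mem1 0) (mem1 1)) (mem1 2))
      (Submodule.smul_mem _ _ (add_mem (add_mem (mem2 0 1) (mem2 0 2)) (mem2 1 2))))
    (Submodule.smul_mem _ _ (add_mem (add_mem (mem2 1 0) (mem2 2 0)) (mem2 2 1)))
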